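/- Let R_o ≥ 0 and let α, β : [R_o, +∞) → ℝ be bounded continuous functions with α(r) → a and β(r) → b as r → +∞. Then for every λ > 0, (1/R) ∫_{R_o}^R (α(r) cos(λr) + β(r) sin(λr))² dr converges to (a² + b²)/2 as R → +∞. -/

import Mathlib

open Filter Real intervalIntegral

lemma avg_zero_aux (R₀ : ℝ) (hR₀ : 0 ≤ R₀) (f : ℝ → ℝ)
    (hf : ContinuousOn f (Set.Ici R₀)) (h0 : Tendsto f atTop (nhds 0)) :
    Tendsto (fun R => (1 / R) * ∫ r in R₀..R, f r) atTop (nhds 0) := by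
  have hint : ∀ u v : ℝ, R₀ ≤ u → R₀ ≤ v → IntervalIntegrable f MeasureTheory.volume u v := by
    intro u v hu hv
    exact (hf.mono (fun x hx => le_trans (le_inf hu hv) hx.1)).intervalIntegrable
  rw [NormedAddCommGroup.tendsto_nhds_zero]
  intro ε hε
  obtain ⟨R₁, hR₁⟩ := Metric.tendsto_atTop.mp h0 (ε/2) (half_pos hε)
  set S := max R₁ R₀ with hS
  have hS0 : R₀ ≤ S := le_max_right _ _
  have hSnn : 0 ≤ S := le_trans hR₀ hS0
  set C := |∫ r in R₀..S, f r| with hC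
  have hCnn : 0 ≤ C := abs_nonneg _
  filter_upwards [eventually_ge_atTop (max S (2*C/ε + 1)), eventually_ge_atTop (1:ℝ)]
    with R hR hR1
  have hRS : S ≤ R := le_trans (le_max_left _ _) hR
  have hRC : 2*C/ε + 1 ≤ R := le_trans (le_max_right _ _) hR
  have hRpos : (0:ℝ) < R := lt_of_lt_of_le one_pos hR1
  have hsplit : (∫ r in R₀..R, f r) = (∫ r in R₀..S, f r) + ∫ r in S..R, f r :=
    (integral_add_adjacent_intervals (hint _ _ le_rfl hS0) (hint _ _ hS0 (le_trans hS0 hRS))).symm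
  have htail : |∫ r in S..R, f r| ≤ ε/2 * |R - S| := by
    have : ‖∫ r in S..R, f r‖ ≤ ε/2 * |R - S| := by
      apply intervalIntegral.norm_integral_le_of_norm_le_const
      intro x hx
      rw [Real.norm_eq_abs]
      rw [Set.uIoc_of_le hRS] at hx
      have : R₁ ≤ x := le_trans (le_max_left _ _) hx.1.le
      have := hR₁ x this
      rw [Real.dist_eq, sub_zero] at this
      exact this.le
    simpa [Real.norm_eq_abs] using this
  have hbound : |∫ r in R₀..R, f r| ≤ C + ε/2 * (R - S) := by
    rw [hsplit]
    calc |(∫ r in R₀..S, f r) + ∫ r in S..R, f r| ≤ C + |∫ r in S..R, f r| := abs_add_le _ _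
      _ ≤ C + ε/2 * (R - S) := by
          rw [abs_of_nonneg (sub_nonneg.mpr hRS)] at htail; linarith
  have key : ε * (2*C/ε + 1) ≤ ε * R := mul_le_mul_of_nonneg_left hRC hε.le
  have key2 : ε * (2*C/ε + 1) = 2*C + ε := by field_simp
  simp only [norm_mul, norm_div, norm_one, Real.norm_eq_abs]
  rw [abs_of_pos hRpos, div_mul_eq_mul_div, one_mul, div_lt_iff₀ hRpos]
  nlinarith [mul_nonneg hε.le hSnn]

theorem trig_average_limit (R₀ : ℝ) (hR₀ : 0 ≤ R₀) (α β : ℝ → ℝ) (a b : ℝ)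
    (hαc : ContinuousOn α (Set.Ici R₀)) (hβc : ContinuousOn β (Set.Ici R₀))
    (hαb : ∃ M, ∀ r ≥ R₀, |α r| ≤ M) (hβb : ∃ M, ∀ r ≥ R₀, |β r| ≤ M)
    (hαa : Tendsto α atTop (nhds a)) (hβb' : Tendsto β atTop (nhds b))
    (lam : ℝ) (hlam : 0 < lam) :
    Tendsto (fun R => (1 / R) *
        ∫ r in R₀..R, (α r * Real.cos (lam * r) + β r * Real.sin (lam * r)) ^ 2)
      atTop (nhds ((a ^ 2 + b ^ 2) / 2)) := by
  set K := (a^2 + b^2)/2 with hK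
  set c₂ := (a^2 - b^2)/2 with hc₂
  set c₃ := a * b with hc₃
  set h : ℝ → ℝ := fun r => K + c₂ * Real.cos (2*lam*r) + c₃ * Real.sin (2*lam*r) with hh
  set g : ℝ → ℝ := fun r =>
    (α r * Real.cos (lam * r) + β r * Real.sin (lam * r)) ^ 2 - h r with hg
  set A : ℝ → ℝ := fun r => (α r^2 + β r^2 - (a^2 + b^2))/2 with hA
  set B : ℝ → ℝ := fun r => ((α r^2 - β r^2) - (a^2 - b^2))/2 with hB
  set Cf : ℝ → ℝ := fun r => α r * β r - a * b with hCf
  -- pointwise identity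
  have hgid : ∀ r, g r = A r + B r * Real.cos (2*lam*r) + Cf r * Real.sin (2*lam*r) := by
    intro r
    simp only [hg, hh, hA, hB, hCf, hK, hc₂, hc₃]
    rw [show (2*lam*r : ℝ) = 2*(lam*r) by ring, Real.cos_two_mul, Real.sin_two_mul]
    linear_combination (β r)^2 * Real.sin_sq_add_cos_sq (lam * r)
  -- g → 0
  have hA0 : Tendsto A atTop (nhds 0) := by
    have : Tendsto (fun r => (α r^2 + β r^2 - (a^2 + b^2))/2) atTop
        (nhds ((a^2 + b^2 - (a^2 + b^2))/2)) :=
      (((hαa.pow 2).add (hβb'.pow 2)).sub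
        (tendsto_const_nhds : Tendsto (fun _ : ℝ => a^2 + b^2) atTop _)).div_const 2
    simpa [hA] using this
  have hB0 : Tendsto B atTop (nhds 0) := by
    have : Tendsto (fun r => ((α r^2 - β r^2) - (a^2 - b^2))/2) atTop
        (nhds ((a^2 - b^2 - (a^2 - b^2))/2)) :=
      (((hαa.pow 2).sub (hβb'.pow 2)).sub
        (tendsto_const_nhds : Tendsto (fun _ : ℝ => a^2 - b^2) atTop _)).div_const 2
    simpa [hB] using this
  have hC0 : Tendsto Cf atTop (nhds 0) := by
    have : Tendsto (fun r => α r * β r - a * b) atTop (nhds (a * b - a * b)) :=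
      (hαa.mul hβb').sub (tendsto_const_nhds : Tendsto (fun _ : ℝ => a * b) atTop _)
    simpa [hCf] using this
  have hg0 : Tendsto g atTop (nhds 0) := by
    apply squeeze_zero_norm (a := fun r => |A r| + |B r| + |Cf r|)
    · intro r
      rw [Real.norm_eq_abs, hgid r]
      calc |A r + B r * Real.cos (2*lam*r) + Cf r * Real.sin (2*lam*r)|
          ≤ |A r + B r * Real.cos (2*lam*r)| + |Cf r * Real.sin (2*lam*r)| := abs_add_le _ _
        _ ≤ |A r| + |B r * Real.cos (2*lam*r)| + |Cf r * Real.sin (2*lam*r)| := by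
            gcongr; exact abs_add_le _ _
        _ ≤ |A r| + |B r| + |Cf r| := by
            rw [abs_mul, abs_mul]
            have h1 := Real.abs_cos_le_one (2*lam*r)
            have h2 := Real.abs_sin_le_one (2*lam*r)
            have h3 := abs_nonneg (B r)
            have h4 := abs_nonneg (Cf r)
            nlinarith
    · simpa using (hA0.abs.add hB0.abs).add hC0.abs
  -- g continuous on Ici R₀
  have hgc : ContinuousOn g (Set.Ici R₀) := by
    apply ContinuousOn.sub
    · apply ContinuousOn.pow
      exact (hαc.mul (Real.continuous_cos.comp (continuous_const.mul continuous_id)).continuousOn).add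
        (hβc.mul (Real.continuous_sin.comp (continuous_const.mul continuous_id)).continuousOn)
    · exact (Continuous.continuousOn
        ((continuous_const.add (continuous_const.mul
          (Real.continuous_cos.comp (continuous_const.mul continuous_id)))).add
         (continuous_const.mul
          (Real.continuous_sin.comp (continuous_const.mul continuous_id)))))
  have havg : Tendsto (fun R => (1 / R) * ∫ r in R₀..R, g r) atTop (nhds 0) :=
    avg_zero_aux R₀ hR₀ g hgc hg0
  -- explicit part
  have hcont_h : Continuous h :=
    (continuous_const.add (continuous_const.mul
      (Real.continuous_cos.comp (continuous_const.mul continuous_id)))).add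
     (continuous_const.mul
      (Real.continuous_sin.comp (continuous_const.mul continuous_id)))
  have hinth : ∀ R, (∫ r in R₀..R, h r)
      = K * (R - R₀) + c₂ * ((Real.sin (2*lam*R) - Real.sin (2*lam*R₀))/(2*lam))
        + c₃ * ((Real.cos (2*lam*R₀) - Real.cos (2*lam*R))/(2*lam)) := by
    intro R
    have h2lam : (2*lam : ℝ) ≠ 0 := by positivity
    have hc : (∫ r in R₀..R, Real.cos (2*lam*r))
        = (Real.sin (2*lam*R) - Real.sin (2*lam*R₀))/(2*lam) := by
      have := intervalIntegral.mul_integral_comp_mul_left (a := R₀) (b := R)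
        (f := Real.cos) (2*lam)
      rw [integral_cos] at this
      field_simp
      exact this
    have hs : (∫ r in R₀..R, Real.sin (2*lam*r))
        = (Real.cos (2*lam*R₀) - Real.cos (2*lam*R))/(2*lam) := by
      have := intervalIntegral.mul_integral_comp_mul_left (a := R₀) (b := R)
        (f := Real.sin) (2*lam)
      rw [integral_sin] at this
      field_simp
      exact this
    rw [hh]
    rw [intervalIntegral.integral_add, intervalIntegral.integral_add,
      intervalIntegral.integral_const, intervalIntegral.integral_const_mul,
      intervalIntegral.integral_const_mul, hc, hs]
    · simp only [smul_eq_mul]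
      ring
    · exact (continuous_const : Continuous fun _ : ℝ => K).intervalIntegrable _ _
    · exact (continuous_const.mul
        (Real.continuous_cos.comp (continuous_const.mul continuous_id))).intervalIntegrable _ _
    · exact (continuous_const.add (continuous_const.mul
        (Real.continuous_cos.comp (continuous_const.mul continuous_id)))).intervalIntegrable _ _
    · exact (continuous_const.mul
        (Real.continuous_sin.comp (continuous_const.mul continuous_id))).intervalIntegrable _ _
  have havgh : Tendsto (fun R => (1 / R) * ∫ r in R₀..R, h r) atTop (nhds K) := by
    have e1 : Tendsto (fun R : ℝ => K * (1 - R₀ / R)) atTop (nhds K) := by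
      have : Tendsto (fun R : ℝ => R₀ / R) atTop (nhds 0) :=
        tendsto_const_nhds.div_atTop tendsto_id
      have := tendsto_const_nhds (x := K) (f := atTop (α := ℝ)) |>.mul
        ((tendsto_const_nhds (x := (1:ℝ))).sub this)
      simpa using this
    have e2 : Tendsto (fun R : ℝ => (1/R) * (c₂ * ((Real.sin (2*lam*R) - Real.sin (2*lam*R₀))/(2*lam))
        + c₃ * ((Real.cos (2*lam*R₀) - Real.cos (2*lam*R))/(2*lam)))) atTop (nhds 0) := by
      apply squeeze_zero_norm' (a := fun R : ℝ => (1/R) * ((|c₂| * (2/(2*lam))) + |c₃| * (2/(2*lam))))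
      · filter_upwards [eventually_ge_atTop (1:ℝ)] with R hR1
        have hRpos : (0:ℝ) < R := lt_of_lt_of_le one_pos hR1
        rw [norm_mul, norm_div, norm_one, Real.norm_eq_abs, Real.norm_eq_abs, abs_of_pos hRpos]
        gcongr 1/R * ?_
        have hl : (0:ℝ) < 2*lam := by positivity
        calc |c₂ * ((Real.sin (2*lam*R) - Real.sin (2*lam*R₀))/(2*lam))
              + c₃ * ((Real.cos (2*lam*R₀) - Real.cos (2*lam*R))/(2*lam))|
            ≤ |c₂ * ((Real.sin (2*lam*R) - Real.sin (2*lam*R₀))/(2*lam))|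
              + |c₃ * ((Real.cos (2*lam*R₀) - Real.cos (2*lam*R))/(2*lam))| := abs_add_le _ _
          _ ≤ |c₂| * (2/(2*lam)) + |c₃| * (2/(2*lam)) := by
              rw [abs_mul, abs_mul]
              gcongr
              · rw [abs_div, abs_of_pos hl]
                gcongr
                have h1 := Real.abs_sin_le_one (2*lam*R)
                have h2 := Real.abs_sin_le_one (2*lam*R₀)
                rw [abs_le] at h1 h2
                rw [abs_sub_le_iff]
                constructor <;> linarith
              · rw [abs_div, abs_of_pos hl]
                gcongr
                have h1 := Real.abs_cos_le_one (2*lam*R)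
                have h2 := Real.abs_cos_le_one (2*lam*R₀)
                rw [abs_le] at h1 h2
                rw [abs_sub_le_iff]
                constructor <;> linarith
      · have : Tendsto (fun R : ℝ => ((|c₂| * (2/(2*lam))) + |c₃| * (2/(2*lam))) / R) atTop (nhds 0) :=
          tendsto_const_nhds.div_atTop tendsto_id
        refine this.congr (fun R => by ring)
    have := e1.add e2
    rw [add_zero] at this
    apply this.congr'
    filter_upwards [eventually_ge_atTop (1:ℝ)] with R hR1
    have hRpos : (0:ℝ) < R := lt_of_lt_of_le one_pos hR1
    rw [hinth R]
    field_simp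
    ring
  -- combine
  have hsum := havg.add havgh
  rw [zero_add] at hsum
  apply hsum.congr'
  filter_upwards [eventually_ge_atTop R₀] with R hRR
  have hintg : IntervalIntegrable g MeasureTheory.volume R₀ R :=
    (hgc.mono (fun x hx => le_trans (le_inf le_rfl hRR) hx.1)).intervalIntegrable
  have hinth' : IntervalIntegrable h MeasureTheory.volume R₀ R :=
    hcont_h.intervalIntegrable _ _
  have : (∫ r in R₀..R, (α r * Real.cos (lam * r) + β r * Real.sin (lam * r)) ^ 2)
      = (∫ r in R₀..R, g r) + ∫ r in R₀..R, h r := by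
    rw [← intervalIntegral.integral_add hintg hinth']
    apply intervalIntegral.integral_congr
    intro x hx
    simp [hg]
  rw [this]
  ring
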